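/- If G is a finite group such that the set {H' : H ≤ G} of derived subgroups of subgroups of G is totally ordered by inclusion, then G is solvable. -/

import Mathlib

/-- A group is a `DC`-group if the set of derived subgroups of its subgroups
is a chain under inclusion. -/
def IsDCGroup (G : Type*) [Group G] : Prop :=
  ∀ H K : Subgroup G, ⁅H, H⁆ ≤ ⁅K, K⁆ ∨ ⁅K, K⁆ ≤ ⁅H, H⁆

lemma IsDCGroup.subgroup {G : Type*} [Group G] (h : IsDCGroup G) (H : Subgroup G) :
    IsDCGroup H := by
  intro A B
  have := h (A.map H.subtype) (B.map H.subtype)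
  rw [← Subgroup.map_commutator, ← Subgroup.map_commutator] at this
  exact this.imp
    (fun hle => (Subgroup.map_le_map_iff_of_injective H.subtype_injective).mp hle)
    (fun hle => (Subgroup.map_le_map_iff_of_injective H.subtype_injective).mp hle)

lemma IsDCGroup.of_surjective {G G' : Type*} [Group G] [Group G'] (f : G →* G')
    (hf : Function.Surjective f) (h : IsDCGroup G) : IsDCGroup G' := by
  intro A B
  have hA : A = (A.comap f).map f := (Subgroup.map_comap_eq_self_of_surjective hf A).symm
  have hB : B = (B.comap f).map f := (Subgroup.map_comap_eq_self_of_surjective hf B).symm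
  rw [hA, hB, ← Subgroup.map_commutator, ← Subgroup.map_commutator]
  exact (h (A.comap f) (B.comap f)).imp
    (fun hle => Subgroup.map_mono hle) (fun hle => Subgroup.map_mono hle)

lemma dc_aux : ∀ (n : ℕ) (G : Type*) [Group G] [Finite G], Nat.card G = n →
    IsDCGroup G → IsSolvable G := by
  intro n
  induction n using Nat.strong_induction_on with
  | _ n ih =>
    intro G _ _ hn h
    by_cases hcomm : ∀ a b : G, a * b = b * a
    · exact isSolvable_of_comm hcomm
    by_cases hN : ∃ N : Subgroup G, N.Normal ∧ N ≠ ⊥ ∧ N ≠ ⊤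
    · obtain ⟨N, hNn, hNbot, hNtop⟩ := hN
      have hcardN : Nat.card N < n := by
        rw [← hn]
        refine lt_of_le_of_ne (Nat.card_le_card_of_injective _ N.subtype_injective) ?_
        intro heq
        exact hNtop (Subgroup.eq_top_of_card_eq N heq)
      have hcardQ : Nat.card (G ⧸ N) < n := by
        rw [← hn, Subgroup.card_eq_card_quotient_mul_card_subgroup N]
        have h2 : 1 < Nat.card N := (Subgroup.one_lt_card_iff_ne_bot N).mpr hNbot
        have hq : 0 < Nat.card (G ⧸ N) := Nat.card_pos
        exact (Nat.lt_mul_iff_one_lt_right hq).mpr h2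
      haveI hNs : IsSolvable N := ih _ hcardN N rfl (h.subgroup N)
      haveI hQs : IsSolvable (G ⧸ N) := ih _ hcardQ (G ⧸ N) rfl
        (h.of_surjective (QuotientGroup.mk' N) (QuotientGroup.mk'_surjective N))
      exact Group.isSolvable_of_ker_le_range N.subtype (QuotientGroup.mk' N)
        (by rw [QuotientGroup.ker_mk', N.range_subtype]) (hG' := hNs) (hG'' := hQs)
    · -- G is simple (no nontrivial proper normal subgroup) and nonabelian : contradiction
      push_neg at hcomm
      obtain ⟨a, b, hab⟩ := hcomm
      haveI : Nontrivial G := ⟨⟨a * b, b * a, hab⟩⟩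
      push_neg at hN
      exfalso
      -- every proper subgroup is abelian
      have hA : ∀ H : Subgroup G, H ≠ ⊤ → ⁅H, H⁆ = ⊥ := by
        set T : Set (Subgroup G) := {K | ∃ J : Subgroup G, J ≠ ⊤ ∧ K = ⁅J, J⁆} with hT
        have hfin : T.Finite := Set.toFinite T
        have hne : T.Nonempty := ⟨⁅(⊥ : Subgroup G), ⊥⁆, ⊥, bot_ne_top, rfl⟩
        obtain ⟨D, hD, hmax⟩ := Set.Finite.exists_maximalFor id T hfin hne
        have hDmax : ∀ K ∈ T, K ≤ D := by
          intro K hK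
          obtain ⟨J, hJ, rfl⟩ := hK
          obtain ⟨J₀, hJ₀, hD'⟩ := hD
          rcases h J J₀ with hle | hle
          · rw [hD']; exact hle
          · rw [hD'] at hmax ⊢
            exact (hmax ⟨J, hJ, rfl⟩ hle)
        obtain ⟨J₀, hJ₀, hDeq⟩ := hD
        have hDtop : D ≠ ⊤ := by
          intro htop
          apply hJ₀
          rw [← top_le_iff, ← htop, hDeq]
          exact (Subgroup.commutator_le).mpr fun g hg h' hh' => by
            exact J₀.mul_mem (J₀.mul_mem (J₀.mul_mem hg hh') (J₀.inv_mem hg)) (J₀.inv_mem hh')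
        have hDnormal : D.Normal := by
          constructor
          intro m hm g
          have hmem : D.map (MulAut.conj g).toMonoidHom ∈ T := by
            refine ⟨J₀.map (MulAut.conj g).toMonoidHom, ?_, ?_⟩
            · intro htop
              apply hJ₀
              have := congrArg (Subgroup.comap (MulAut.conj g).toMonoidHom) htop
              rwa [Subgroup.comap_map_eq_self_of_injective (MulAut.conj g).injective,
                Subgroup.comap_top] at this
            · rw [hDeq, Subgroup.map_commutator]
          have hle := hDmax _ hmem
          have : (MulAut.conj g).toMonoidHom m ∈ D.map (MulAut.conj g).toMonoidHom :=
            Subgroup.mem_map.mpr ⟨m, hm, rfl⟩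
          have := hle this
          simpa [MulAut.conj_apply] using this
        have hDbot : D = ⊥ := by
          by_contra hDbot
          exact hDtop (hN D hDnormal hDbot)
        intro H hH
        exact le_bot_iff.mp (hDbot ▸ hDmax ⁅H, H⁆ ⟨H, hH, rfl⟩)
      -- Burnside's normal p-complement theorem gives a contradiction
      have hcard1 : Nat.card G ≠ 1 := Finite.one_lt_card.ne'
      obtain ⟨p, hp, hpdvd⟩ := Nat.exists_prime_and_dvd hcard1
      haveI : Fact p.Prime := ⟨hp⟩
      obtain ⟨P⟩ : Nonempty (Sylow p G) := inferInstance
      have hPbot : (P : Subgroup G) ≠ ⊥ := P.ne_bot_of_dvd_card hpdvd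
      have hPtop : (P : Subgroup G) ≠ ⊤ := by
        intro htop
        -- G would be a p-group with nontrivial center
        have hpg : IsPGroup p G := by
          intro g
          obtain ⟨k, hk⟩ := P.2 ⟨g, htop ▸ Subgroup.mem_top g⟩
          exact ⟨k, by simpa [Subtype.ext_iff] using hk⟩
        haveI := hpg.center_nontrivial
        have hcbot : Subgroup.center G ≠ ⊥ := by
          intro hbot
          rw [hbot] at this
          exact false_of_nontrivial_of_subsingleton (⊥ : Subgroup G)
        have hctop : Subgroup.center G ≠ ⊤ := by
          intro htop'
          exact hab (((Subgroup.mem_center_iff.mp (htop' ▸ Subgroup.mem_top a)) b).symm)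
        exact hctop (hN _ inferInstance hcbot)
      have hnorm : Subgroup.normalizer ((P : Subgroup G) : Set G) ≠ ⊤ := by
        intro htop
        exact hPtop (hN _ (Subgroup.normalizer_eq_top_iff.mp htop) hPbot)
      have habel := hA _ hnorm
      rw [Subgroup.commutator_eq_bot_iff_le_centralizer] at habel
      have hle : Subgroup.normalizer ((P : Subgroup G) : Set G) ≤ Subgroup.centralizer (P : Set G) := by
        intro x hx
        rw [Subgroup.mem_centralizer_iff]
        intro y hy
        have hyn : y ∈ Subgroup.normalizer ((P : Subgroup G) : Set G) := Subgroup.le_normalizer hy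
        exact (Subgroup.mem_centralizer_iff.mp (habel hx)) y hyn
      have hker := MonoidHom.ker_transferSylow_isComplement' P hle
      have hker_normal : (MonoidHom.transferSylow P hle).ker.Normal := MonoidHom.normal_ker _
      by_cases hb : (MonoidHom.transferSylow P hle).ker = ⊥
      · rw [hb] at hker
        exact hPtop (Subgroup.isComplement'_bot_left.mp hker)
      · have ht : (MonoidHom.transferSylow P hle).ker = ⊤ := hN _ hker_normal hb
        rw [ht] at hker
        exact hPbot (Subgroup.isComplement'_top_left.mp hker)

theorem dc_group_solvable (G : Type*) [Group G] [Finite G] (h : IsDCGroup G) :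
    IsSolvable G := by
  exact dc_aux (Nat.card G) G rfl h
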